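/- Let (X,d) be a geodesic metric space, U ⊂ X open, and u: U → ℝ locally Lipschitz. Suppose for a bounded open V with V̄ ⊂ U we have sup_{x ∈ V} Lip_d u(x) ≤ L_{∂V} := Lip_d(u, ∂V), where Lip_d u(x) is the pointwise Lipschitz constant. Then Lip_d(u, V) ≤ Lip_d(u, ∂V): for any x, y ∈ V, |u(x) − u(y)| ≤ Lip_d(u, ∂V)·d(x,y). -/

import Mathlib

open Set Metric Filter Topology

/-- Auxiliary: along a curve with constant-speed distance formula that stays in `V`
on `[a, b)` and ends in `closure V`, the pointwise estimate integrates up. -/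
lemma stmt12_aux {X : Type*} [MetricSpace X] {U V : Set X} (hVU : closure V ⊆ U)
    {u : X → ℝ} (hucont : ContinuousOn u U)
    {M : ℝ}
    (hpt : ∀ z ∈ V, ∀ᶠ w in 𝓝 z, |u w - u z| ≤ M * dist w z)
    {γ : ℝ → X} {D : ℝ} (hD : 0 ≤ D)
    {a b : ℝ} (hab : a ≤ b)
    (hdist : ∀ s ∈ Icc a b, ∀ t ∈ Icc a b, dist (γ s) (γ t) = |s - t| * D)
    (hin : ∀ t ∈ Ico a b, γ t ∈ V)
    (hend : γ b ∈ closure V) :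
    |u (γ b) - u (γ a)| ≤ M * (b - a) * D := by
  have hrange : ∀ t ∈ Icc a b, γ t ∈ U := by
    intro t ht
    rcases lt_or_eq_of_le ht.2 with h | h
    · exact hVU (subset_closure (hin t ⟨ht.1, h⟩))
    · rw [h]; exact hVU hend
  have hγlip : LipschitzOnWith (Real.toNNReal D) γ (Icc a b) := by
    apply LipschitzOnWith.of_dist_le_mul
    intro s hs t ht
    rw [hdist s hs t ht, Real.dist_eq, Real.coe_toNNReal D hD, mul_comm]
  have hγc : ContinuousOn γ (Icc a b) := hγlip.continuousOn
  have hfc : ContinuousOn (fun t => u (γ t)) (Icc a b) := hucont.comp hγc hrange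
  set S := {t | t ∈ Icc a b ∧ |u (γ t) - u (γ a)| ≤ M * (t - a) * D} with hS
  have haS : a ∈ S := ⟨⟨le_refl a, hab⟩, by simp⟩
  have hSbdd : BddAbove S := ⟨b, fun t ht => ht.1.2⟩
  have hScl : IsClosed S := by
    have hSeq : S = Icc a b ∩
        (fun t => |u (γ t) - u (γ a)| - M * (t - a) * D) ⁻¹' (Iic 0) := by
      ext t
      simp only [hS, mem_setOf_eq, mem_inter_iff, mem_preimage, mem_Iic, sub_nonpos]
    rw [hSeq]
    have hcont : ContinuousOn (fun t => |u (γ t) - u (γ a)| - M * (t - a) * D)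
        (Icc a b) := by
      apply ContinuousOn.sub
      · exact (hfc.sub continuousOn_const).abs
      · exact ((continuous_const.mul (continuous_id.sub continuous_const)).mul
          continuous_const).continuousOn
    exact hcont.preimage_isClosed_of_isClosed isClosed_Icc isClosed_Iic
  set c := sSup S with hc
  have hcS : c ∈ S := hScl.csSup_mem ⟨a, haS⟩ hSbdd
  have hcb : c ≤ b := hcS.1.2
  rcases eq_or_lt_of_le hcb with hcb' | hclt
  · have := hcS.2
    rw [hcb'] at this
    exact this
  · exfalso
    have hγcV : γ c ∈ V := hin c ⟨hcS.1.1, hclt⟩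
    obtain ⟨δ, hδ, hball⟩ := Metric.eventually_nhds_iff.mp (hpt (γ c) hγcV)
    have hD1 : (0:ℝ) < D + 1 := by linarith
    set t := min (c + δ / (D + 1)) ((c + b) / 2) with ht
    have hct : c < t := by
      apply lt_min
      · have : 0 < δ / (D + 1) := div_pos hδ hD1
        linarith
      · linarith
    have htb : t < b := lt_of_le_of_lt (min_le_right _ _) (by linarith)
    have htI : t ∈ Icc a b := ⟨hcS.1.1.trans hct.le, htb.le⟩
    have hdtc : dist (γ t) (γ c) = (t - c) * D := by
      rw [hdist t htI c hcS.1, abs_of_pos (sub_pos.mpr hct)]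
    have htc' : t - c ≤ δ / (D + 1) := by
      have := min_le_left (c + δ / (D + 1)) ((c + b) / 2)
      rw [← ht] at this
      linarith
    have hlt : dist (γ t) (γ c) < δ := by
      rw [hdtc]
      have h1 : (t - c) * D ≤ δ / (D + 1) * D :=
        mul_le_mul_of_nonneg_right htc' hD
      have h2 : δ / (D + 1) * D < δ := by
        rw [div_mul_eq_mul_div, div_lt_iff₀ hD1]
        nlinarith
      linarith
    have hPt := hball hlt
    have htS : t ∈ S := by
      refine ⟨htI, ?_⟩
      have htri : |u (γ t) - u (γ a)| ≤ |u (γ t) - u (γ c)| + |u (γ c) - u (γ a)| :=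
        abs_sub_le _ _ _
      have h1 : |u (γ t) - u (γ c)| ≤ M * (t - c) * D := by
        calc |u (γ t) - u (γ c)| ≤ M * dist (γ t) (γ c) := hPt
        _ = M * (t - c) * D := by rw [hdtc]; ring
      have h2 := hcS.2
      calc |u (γ t) - u (γ a)| ≤ M * (t - c) * D + M * (c - a) * D := by linarith
      _ = M * (t - a) * D := by ring
    exact absurd (le_csSup hSbdd htS) (not_le.mpr hct)

/-- in a geodesic metric space, if `u` is locally Lipschitz on `U`,
`V` is bounded open with `closure V ⊆ U`, `L` is the Lipschitz constant of `u` on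
`∂V`, and the pointwise Lipschitz constant of `u` is at most `L` at every point of
`V`, then `u` is `L`-Lipschitz on `V`. -/
theorem stmt12 {X : Type*} [MetricSpace X]
    (hgeo : ∀ x y : X, ∃ γ : ℝ → X, γ 0 = x ∧ γ 1 = y ∧
      ∀ s ∈ Icc (0 : ℝ) 1, ∀ t ∈ Icc (0 : ℝ) 1, dist (γ s) (γ t) = |s - t| * dist x y)
    (U V : Set X) (hU : IsOpen U) (hV : IsOpen V) (hVb : Bornology.IsBounded V)
    (hVU : closure V ⊆ U) (hbd : (frontier V).Nonempty)
    (u : X → ℝ)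
    (huloc : ∀ x ∈ U, ∃ K : NNReal, ∃ s ∈ nhds x, LipschitzOnWith K u s)
    (L : ℝ)
    (hL : IsLUB {r : ℝ | ∃ p ∈ frontier V, ∃ q ∈ frontier V, r = |u p - u q| / dist p q} L)
    (hptwise : ∀ x ∈ V,
      Filter.limsup (fun y => |u y - u x| / dist y x) (nhdsWithin x {x}ᶜ) ≤ L) :
    ∀ x ∈ V, ∀ y ∈ V, |u x - u y| ≤ L * dist x y := by
  obtain ⟨p0, hp0⟩ := hbd
  have hL0 : 0 ≤ L := hL.1 ⟨p0, hp0, p0, hp0, by simp⟩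
  have hucont : ContinuousOn u U := by
    intro z hz
    obtain ⟨K, s, hs, hK⟩ := huloc z hz
    exact (hK.continuousOn.continuousAt hs).continuousWithinAt
  have hfr : ∀ p ∈ frontier V, ∀ q ∈ frontier V, |u p - u q| ≤ L * dist p q := by
    intro p hp q hq
    rcases eq_or_ne p q with h | h
    · subst h; simp
    · have hd : 0 < dist p q := dist_pos.mpr h
      have : |u p - u q| / dist p q ≤ L := hL.1 ⟨p, hp, q, hq, rfl⟩
      calc |u p - u q| = |u p - u q| / dist p q * dist p q := by field_simp
      _ ≤ L * dist p q := mul_le_mul_of_nonneg_right this hd.le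
  intro x hx y hy
  have key : ∀ ε > 0, |u x - u y| ≤ (L + ε) * dist x y := by
    intro ε hε
    set M := L + ε with hM
    clear_value M
    have hpt : ∀ z ∈ V, ∀ᶠ w in 𝓝 z, |u w - u z| ≤ M * dist w z := by
      intro z hz
      have hzU : z ∈ U := hVU (subset_closure hz)
      obtain ⟨K, s, hs, hK⟩ := huloc z hzU
      have hzs : z ∈ s := mem_of_mem_nhds hs
      have hbdd : IsBoundedUnder (· ≤ ·) (nhdsWithin z {z}ᶜ)
          (fun w => |u w - u z| / dist w z) := by
        refine ⟨K, ?_⟩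
        rw [eventually_map]
        have hsmem : s ∈ nhdsWithin z {z}ᶜ := mem_nhdsWithin_of_mem_nhds hs
        filter_upwards [hsmem, self_mem_nhdsWithin] with w hws hwz
        have hwne : w ≠ z := hwz
        have hd : 0 < dist w z := dist_pos.mpr hwne
        have := hK.dist_le_mul w hws z hzs
        rw [Real.dist_eq] at this
        rw [div_le_iff₀ hd]
        exact this
      have hlt : Filter.limsup (fun w => |u w - u z| / dist w z)
          (nhdsWithin z {z}ᶜ) < M := lt_of_le_of_lt (hptwise z hz) (by rw [hM]; linarith)
      have hev := Filter.eventually_lt_of_limsup_lt hlt hbdd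
      rw [eventually_nhdsWithin_iff] at hev
      filter_upwards [hev] with w hw
      by_cases hwz : w = z
      · subst hwz; simp
      · have hd : 0 < dist w z := dist_pos.mpr hwz
        have := hw hwz
        rw [div_lt_iff₀ hd] at this
        linarith
    obtain ⟨γ, hγ0, hγ1, hγd⟩ := hgeo x y
    set D := dist x y with hDdef
    have hD : 0 ≤ D := dist_nonneg
    clear_value D
    have hγlip : LipschitzOnWith (Real.toNNReal D) γ (Icc 0 1) := by
      apply LipschitzOnWith.of_dist_le_mul
      intro s hs t ht
      rw [hγd s hs t ht, Real.dist_eq, Real.coe_toNNReal D hD, mul_comm]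
    have hγc : ContinuousOn γ (Icc 0 1) := hγlip.continuousOn
    by_cases hE : (Icc (0:ℝ) 1 ∩ γ ⁻¹' Vᶜ).Nonempty
    · set E := Icc (0:ℝ) 1 ∩ γ ⁻¹' Vᶜ with hEdef
      have hEcl : IsClosed E :=
        hγc.preimage_isClosed_of_isClosed isClosed_Icc hV.isClosed_compl
      have hEbdd : BddAbove E := ⟨1, fun t ht => ht.1.2⟩
      have hEbdd' : BddBelow E := ⟨0, fun t ht => ht.1.1⟩
      set a := sInf E with ha
      set b := sSup E with hb
      have haE : a ∈ E := hEcl.csInf_mem hE hEbdd'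
      have hbE : b ∈ E := hEcl.csSup_mem hE hEbdd
      have hab : a ≤ b := csInf_le_csSup hE hEbdd' hEbdd
      clear_value a b
      have h0E : (0:ℝ) ∉ E := by
        intro h
        have : γ 0 ∉ V := h.2
        rw [hγ0] at this
        exact this hx
      have h1E : (1:ℝ) ∉ E := by
        intro h
        have : γ 1 ∉ V := h.2
        rw [hγ1] at this
        exact this hy
      have h0a : 0 < a := lt_of_le_of_ne haE.1.1 (fun h => h0E (h ▸ haE))
      have hb1 : b < 1 := lt_of_le_of_ne hbE.1.2 (fun h => h1E (h ▸ hbE))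
      have hD1 : (0:ℝ) < D + 1 := by linarith
      have hbelow : ∀ t ∈ Ico (0:ℝ) a, γ t ∈ V := by
        intro t ht
        by_contra hcon
        have htE : t ∈ E := ⟨⟨ht.1, ht.2.le.trans haE.1.2⟩, hcon⟩
        have hle := csInf_le hEbdd' htE
        rw [← ha] at hle
        exact absurd hle (not_le.mpr ht.2)
      have habove : ∀ t ∈ Ioc b (1:ℝ), γ t ∈ V := by
        intro t ht
        by_contra hcon
        have htE : t ∈ E := ⟨⟨hbE.1.1.trans ht.1.le, ht.2⟩, hcon⟩
        have hle := le_csSup hEbdd htE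
        rw [← hb] at hle
        exact absurd hle (not_le.mpr ht.1)
      have hacl : γ a ∈ closure V := by
        rw [Metric.mem_closure_iff]
        intro δ hδ
        set r := min a (δ / (D + 1)) with hr
        have hr0 : 0 < r := lt_min h0a (div_pos hδ hD1)
        clear_value r
        set t := a - r / 2 with htdef
        clear_value t
        have htmem : t ∈ Ico (0:ℝ) a := by
          constructor
          · have : r ≤ a := by rw [hr]; exact min_le_left _ _
            rw [htdef]; linarith
          · rw [htdef]; linarith
        refine ⟨γ t, hbelow t htmem, ?_⟩
        have htI : t ∈ Icc (0:ℝ) 1 := ⟨htmem.1, htmem.2.le.trans haE.1.2⟩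
        rw [hγd a haE.1 t htI, abs_of_pos (by rw [htdef]; linarith)]
        have hrd : r ≤ δ / (D + 1) := by rw [hr]; exact min_le_right _ _
        have h1 : (a - t) * D ≤ δ / (D + 1) / 2 * D := by
          apply mul_le_mul_of_nonneg_right _ hD
          rw [htdef]; linarith
        have h2 : δ / (D + 1) / 2 * D < δ := by
          rw [div_mul_eq_mul_div, div_lt_iff₀ (by linarith : (0:ℝ) < 2)]
          rw [div_mul_eq_mul_div, div_lt_iff₀ hD1]
          nlinarith
        linarith
      have hbcl : γ b ∈ closure V := by
        rw [Metric.mem_closure_iff]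
        intro δ hδ
        set r := min (1 - b) (δ / (D + 1)) with hr
        have hr0 : 0 < r := lt_min (by linarith) (div_pos hδ hD1)
        clear_value r
        set t := b + r / 2 with htdef
        clear_value t
        have htmem : t ∈ Ioc b (1:ℝ) := by
          constructor
          · rw [htdef]; linarith
          · have : r ≤ 1 - b := by rw [hr]; exact min_le_left _ _
            rw [htdef]; linarith
        refine ⟨γ t, habove t htmem, ?_⟩
        have htI : t ∈ Icc (0:ℝ) 1 := ⟨hbE.1.1.trans htmem.1.le, htmem.2⟩
        rw [hγd b hbE.1 t htI, abs_of_neg (by rw [htdef]; linarith), neg_sub]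
        have hrd : r ≤ δ / (D + 1) := by rw [hr]; exact min_le_right _ _
        have h1 : (t - b) * D ≤ δ / (D + 1) / 2 * D := by
          apply mul_le_mul_of_nonneg_right _ hD
          rw [htdef]; linarith
        have h2 : δ / (D + 1) / 2 * D < δ := by
          rw [div_mul_eq_mul_div, div_lt_iff₀ (by linarith : (0:ℝ) < 2)]
          rw [div_mul_eq_mul_div, div_lt_iff₀ hD1]
          nlinarith
        linarith
      have hafr : γ a ∈ frontier V := by
        rw [hV.frontier_eq]; exact ⟨hacl, haE.2⟩
      have hbfr : γ b ∈ frontier V := by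
        rw [hV.frontier_eq]; exact ⟨hbcl, hbE.2⟩
      have e1 : |u (γ a) - u (γ 0)| ≤ M * (a - 0) * D := by
        apply stmt12_aux hVU hucont hpt hD h0a.le
        · intro s hs t ht
          exact hγd s ⟨hs.1, hs.2.trans haE.1.2⟩ t ⟨ht.1, ht.2.trans haE.1.2⟩
        · exact hbelow
        · exact hacl
      have e2 : |u (γ a) - u (γ b)| ≤ L * (b - a) * D := by
        have hthis := hfr (γ a) hafr (γ b) hbfr
        have habs : |a - b| = b - a := by
          rw [abs_sub_comm]; exact abs_of_nonneg (by linarith)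
        rw [hγd a haE.1 b hbE.1, habs] at hthis
        calc |u (γ a) - u (γ b)| ≤ L * ((b - a) * D) := hthis
        _ = L * (b - a) * D := by ring
      have e3 : |u (γ b) - u (γ 1)| ≤ M * (1 - b) * D := by
        have := stmt12_aux (γ := fun s => γ (1 - s)) hVU hucont hpt hD
          (by linarith : (0:ℝ) ≤ 1 - b)
          (by
            intro s hs t ht
            have hs' : 1 - s ∈ Icc (0:ℝ) 1 := ⟨by linarith [hs.2, hbE.1.1], by linarith [hs.1]⟩
            have ht' : 1 - t ∈ Icc (0:ℝ) 1 := ⟨by linarith [ht.2, hbE.1.1], by linarith [ht.1]⟩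
            rw [hγd (1 - s) hs' (1 - t) ht']
            congr 1
            rw [show (1:ℝ) - s - (1 - t) = t - s by ring, abs_sub_comm])
          (by
            intro t ht
            apply habove
            exact ⟨by linarith [ht.2], by linarith [ht.1]⟩)
          (by show γ (1 - (1 - b)) ∈ closure V
              rw [show (1:ℝ) - (1 - b) = b by ring]; exact hbcl)
        simp only [show (1:ℝ) - (1 - b) = b by ring, sub_zero] at this
        exact this
      rw [hγ0] at e1
      rw [hγ1] at e3
      have htri : |u x - u y| ≤ |u (γ a) - u x| + |u (γ a) - u (γ b)| + |u (γ b) - u y| := by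
        have h1 : |u x - u y| ≤ |u x - u (γ a)| + |u (γ a) - u y| := abs_sub_le _ _ _
        have h2 : |u (γ a) - u y| ≤ |u (γ a) - u (γ b)| + |u (γ b) - u y| := abs_sub_le _ _ _
        rw [abs_sub_comm (u x) (u (γ a))] at h1
        linarith
      have hML : L ≤ M := by rw [hM]; linarith
      have h1b : (1:ℝ) - b ≥ 0 := by linarith
      have hba : b - a ≥ 0 := by linarith
      have ha0 : a - 0 ≥ 0 := by linarith
      calc |u x - u y| ≤ M * (a - 0) * D + L * (b - a) * D + M * (1 - b) * D := by
            linarith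
      _ ≤ M * D := by
            nlinarith [mul_nonneg (mul_nonneg (sub_nonneg.mpr hML) hba) hD]
    · have hall : ∀ t ∈ Icc (0:ℝ) 1, γ t ∈ V := by
        intro t ht
        by_contra hcon
        exact hE ⟨t, ht, hcon⟩
      have := stmt12_aux hVU hucont hpt hD (by norm_num : (0:ℝ) ≤ 1) hγd
        (fun t ht => hall t ⟨ht.1, ht.2.le⟩)
        (subset_closure (by rw [hγ1]; exact hy))
      rw [hγ0, hγ1] at this
      rw [abs_sub_comm] at this
      calc |u x - u y| ≤ M * (1 - 0) * D := this
      _ = M * D := by ring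
  rcases eq_or_lt_of_le (dist_nonneg : (0:ℝ) ≤ dist x y) with h0 | h0
  · have hxy : x = y := by
      have : dist x y = 0 := h0.symm
      rwa [dist_eq_zero] at this
    subst hxy
    simp
  · apply le_of_forall_pos_le_add
    intro ε' hε'
    have := key (ε' / dist x y) (div_pos hε' h0)
    calc |u x - u y| ≤ (L + ε' / dist x y) * dist x y := this
    _ = L * dist x y + ε' := by field_simp
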